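/- Let C, R_A, R_B > 0 and V_DD > 0, and let 0 ≤ Δ < log(2)·C·R_A. Define V₁(t) = V_DD · exp(−t/(C·R_A)) for t ∈ [0,Δ], and V₂(t) = V₁(Δ) · exp(−(1/(C·R_A) + 1/(C·R_B))·t) for t ≥ 0. Then the total time δ (measured from time 0) at which the concatenated trajectory first reaches V_DD/2 satisfies δ = (log(2)·C·R_A·R_B − Δ·R_B)/(R_A + R_B) + Δ. Moreover, if Δ ≥ log(2)·C·R_A, the first trajectory V₁ already crosses V_DD/2 at time log(2)·C·R_A ≤ Δ. -/

import Mathlib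

/-- MIS falling-output delay of a two-input NOR gate (`δ_min = 0`): with a first discharge
path `R_A` switched on at time `0` and a second parallel path `R_B` switched on at time
`Δ`, the concatenated trajectory first reaches `V_DD/2` at
`δ = (log 2 · C · R_A · R_B − Δ · R_B)/(R_A + R_B) + Δ` when `0 ≤ Δ < log 2 · C · R_A`;
whereas if `Δ ≥ log 2 · C · R_A` the first trajectory alone crosses `V_DD/2` already at
time `log 2 · C · R_A ≤ Δ`. -/
theorem stmt_2 (C RA RB VDD : ℝ) (hC : 0 < C) (hRA : 0 < RA) (hRB : 0 < RB)
    (hV : 0 < VDD) (Δ : ℝ) (hΔ : 0 ≤ Δ) :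
    -- the concatenated trajectory
    (∀ V : ℝ → ℝ,
      (∀ t, 0 ≤ t → t ≤ Δ → V t = VDD * Real.exp (-t / (C * RA))) →
      (∀ t, Δ < t → V t =
        (VDD * Real.exp (-Δ / (C * RA))) *
          Real.exp (-(1 / (C * RA) + 1 / (C * RB)) * (t - Δ))) →
      Δ < Real.log 2 * C * RA →
      IsLeast {t : ℝ | 0 ≤ t ∧ V t = VDD / 2}
        ((Real.log 2 * C * RA * RB - Δ * RB) / (RA + RB) + Δ)) ∧
    (Real.log 2 * C * RA ≤ Δ →
      VDD * Real.exp (-(Real.log 2 * C * RA) / (C * RA)) = VDD / 2 ∧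
      Real.log 2 * C * RA ≤ Δ) := by
  have hCRA : (0:ℝ) < C * RA := by positivity
  have hhalf : Real.exp (-Real.log 2) = 1/2 := by
    rw [Real.exp_neg, Real.exp_log (by norm_num)]; norm_num
  constructor
  · intro V h1 h2 hΔlt
    set δ := (Real.log 2 * C * RA * RB - Δ * RB) / (RA + RB) + Δ with hδ
    have hRARB : (0:ℝ) < RA + RB := by positivity
    have hΔδ : Δ < δ := by
      have h0 : 0 < (Real.log 2 * C * RA * RB - Δ * RB) / (RA + RB) :=
        div_pos (by nlinarith) hRARB
      simp only [hδ]; linarith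
    have hkey : -Δ / (C * RA) + -(1 / (C * RA) + 1 / (C * RB)) * (δ - Δ)
        = -Real.log 2 := by
      simp only [hδ]
      field_simp
      ring
    constructor
    · refine ⟨le_trans hΔ hΔδ.le, ?_⟩
      rw [h2 δ hΔδ, mul_assoc, ← Real.exp_add, hkey, hhalf]
      ring
    · rintro t ⟨ht0, htV⟩
      rcases le_or_gt t Δ with hle | hlt
      · exfalso
        rw [h1 t ht0 hle] at htV
        have : Real.exp (-t / (C * RA)) = Real.exp (-Real.log 2) := by
          rw [hhalf]
          exact mul_left_cancel₀ (ne_of_gt hV) (htV.trans (by ring))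
        have := Real.exp_injective this
        have : t = Real.log 2 * C * RA := by
          field_simp at this
          linarith
        linarith
      · rw [h2 t hlt] at htV
        have hexp : Real.exp (-Δ / (C * RA) + -(1 / (C * RA) + 1 / (C * RB)) * (t - Δ))
            = Real.exp (-Real.log 2) := by
          rw [Real.exp_add, hhalf]
          rw [mul_assoc] at htV
          exact mul_left_cancel₀ (ne_of_gt hV) (htV.trans (by ring))
        have heq := Real.exp_injective hexp
        have : t = δ := by
          have h2' : -(1 / (C * RA) + 1 / (C * RB)) * (t - Δ)
              = -(1 / (C * RA) + 1 / (C * RB)) * (δ - Δ) := by linarith [hkey]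
          have hk : -(1 / (C * RA) + 1 / (C * RB)) ≠ 0 := by
            have : 0 < 1 / (C * RA) + 1 / (C * RB) := by positivity
            linarith
          have := mul_left_cancel₀ hk h2'
          linarith
        linarith [this.ge]
  · intro h
    refine ⟨?_, h⟩
    have : -(Real.log 2 * C * RA) / (C * RA) = -Real.log 2 := by
      field_simp
    rw [this, hhalf]; ring
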